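/- Let 1 → N → G → H → 1 be a short exact sequence of finite groups with |N| ≤ R and H abelian. Then the centralizer G₁ = C_G(N) has index at most R! in G and G₁ is nilpotent of class at most two. -/

import Mathlib

open scoped commutatorElement

/-- Let `1 → N → G → H → 1` be a short exact sequence of finite groups with `|N| ≤ R` and
`H = G/N` abelian.  Then the centralizer `G₁ = C_G(N)` has index at most `R!` in `G` and
`G₁` is nilpotent of class at most two. -/
theorem stmt_3 (G : Type*) [Group G] [Finite G] (R : ℕ)
    (N : Subgroup G) [N.Normal] (hN : Nat.card N ≤ R)
    (hab : ∀ x y : G, ⁅x, y⁆ ∈ N) :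
    (Subgroup.centralizer (N : Set G)).index ≤ Nat.factorial R ∧
      commutator (Subgroup.centralizer (N : Set G)) ≤
        Subgroup.center (Subgroup.centralizer (N : Set G)) := by
  constructor
  · have hker : (MulAut.conjNormal (H := N) : G →* MulAut N).ker ≤
        Subgroup.centralizer (N : Set G) := by
      intro g hg
      rw [Subgroup.mem_centralizer_iff]
      intro n hn
      rw [MonoidHom.mem_ker] at hg
      have h1 : ((MulAut.conjNormal g ⟨n, hn⟩ : N) : G) = g * n * g⁻¹ :=
        MulAut.conjNormal_apply g ⟨n, hn⟩
      rw [hg] at h1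
      simp only [MulAut.one_apply] at h1
      rw [eq_comm, mul_inv_eq_iff_eq_mul] at h1
      exact h1.symm
    calc (Subgroup.centralizer (N : Set G)).index
        ≤ (MulAut.conjNormal (H := N) : G →* MulAut N).ker.index :=
          Nat.le_of_dvd ?_ (Subgroup.index_dvd_of_le hker)
      _ = Nat.card (MulAut.conjNormal (H := N) : G →* MulAut N).range :=
          Subgroup.index_ker _
      _ ≤ Nat.card (MulAut N) := Nat.card_le_card_of_injective _ Subtype.val_injective
      _ ≤ Nat.card (Equiv.Perm N) :=
          Nat.card_le_card_of_injective MulEquiv.toEquiv (fun a b h => by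
            exact MulEquiv.ext fun x => congrFun (congrArg DFunLike.coe h) x)
      _ = Nat.factorial (Nat.card N) := by
          haveI : Fintype N := Fintype.ofFinite N
          haveI : DecidableEq N := Classical.decEq _
          rw [Nat.card_eq_fintype_card, Nat.card_eq_fintype_card, Fintype.card_perm]
      _ ≤ Nat.factorial R := Nat.factorial_le hN
    · have : (MulAut.conjNormal (H := N) : G →* MulAut N).ker.index ≠ 0 :=
        Subgroup.index_ne_zero_of_finite
      exact Nat.pos_of_ne_zero this
  · rw [commutator, Subgroup.commutator_le]
    intro x _ y _
    rw [Subgroup.mem_center_iff]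
    intro g
    ext
    push_cast
    have hc : (⁅(x : G), (y : G)⁆) ∈ N := hab x y
    exact (g.2 _ hc).symm
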